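/- arXiv:1706.03900 — 2 statements merged into one kernel-verified Lean document; each statement's English description precedes it below -/
import Mathlib

section
/- Let Γ be a commutative monoid, A a finitely generated Γ-graded monoid, and H_A its Hall algebra. The subspace J^{gr} spanned by the delta functions δ_M over isomorphism classes of finite A-modules M that do NOT admit a Γ-grading is a Hopf ideal of H_A, so that H_A/J^{gr} is a graded, connected, co-commutative Hopf algebra. -/
universe u v

/-- A module over a monoid-with-zero `A` on a pointed set ("vector space over 𝔽₁"):
a pointed set `(M, 0)` with an action of `A` satisfying `1•m = m`, `(a*b)•m = a•(b•m)`,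
`0•m = 0` and `a•0 = 0`. -/
structure FModule (A : Type v) [MonoidWithZero A] : Type (max (u + 1) v) where
  carrier : Type u
  zero : carrier
  smul : A → carrier → carrier
  one_smul : ∀ m, smul 1 m = m
  mul_smul : ∀ a b m, smul (a * b) m = smul a (smul b m)
  zero_smul : ∀ m, smul 0 m = zero
  smul_zero : ∀ a, smul a zero = zero

namespace FModule

variable {A : Type v} [MonoidWithZero A]

/-- `N` is an `A`-submodule of `M` : a subset containing the basepoint and closed under
the action of `A`. -/
def IsSubmod (M : FModule A) (N : Set M.carrier) : Prop :=
  M.zero ∈ N ∧ ∀ (a : A), ∀ m ∈ N, M.smul a m ∈ N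

/-- The submodule `N ⊆ M` as an `A`-module in its own right. -/
def sub (M : FModule A) (N : Set M.carrier) (h : M.IsSubmod N) : FModule A where
  carrier := N
  zero := ⟨M.zero, h.1⟩
  smul a m := ⟨M.smul a m.1, h.2 a m.1 m.2⟩
  one_smul m := Subtype.ext (M.one_smul m.1)
  mul_smul a b m := Subtype.ext (M.mul_smul a b m.1)
  zero_smul m := Subtype.ext (M.zero_smul m.1)
  smul_zero a := Subtype.ext (M.smul_zero a)

open Classical in
/-- The quotient `M/N` of `M` by a submodule `N`: the pointed set `(M ∖ N) ∪ {0}`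
with the induced `A`-action. -/
noncomputable def quot (M : FModule A) (N : Set M.carrier) (h : M.IsSubmod N) :
    FModule A where
  carrier := {x : M.carrier // x = M.zero ∨ x ∉ N}
  zero := ⟨M.zero, Or.inl rfl⟩
  smul a m := if hmem : M.smul a m.1 ∈ N then ⟨M.zero, Or.inl rfl⟩
    else ⟨M.smul a m.1, Or.inr hmem⟩
  one_smul := by
    classical
    rintro ⟨x, hx⟩
    by_cases hmem : M.smul 1 x ∈ N
    · have hxN : x ∈ N := by rwa [M.one_smul] at hmem
      have hx0 : x = M.zero := hx.resolve_right fun hc => hc hxN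
      simp only [dif_pos hmem]
      exact Subtype.ext hx0.symm
    · simp only [dif_neg hmem]
      exact Subtype.ext (M.one_smul x)
  mul_smul := by
    classical
    rintro a b ⟨x, hx⟩
    by_cases hb : M.smul b x ∈ N
    · have hab : M.smul (a * b) x ∈ N := by
        rw [M.mul_smul]; exact h.2 a _ hb
      have h0 : M.smul a M.zero ∈ N := by
        rw [M.smul_zero]; exact h.1
      simp only [dif_pos hb, dif_pos hab, dif_pos h0]
    · by_cases hab : M.smul a (M.smul b x) ∈ N
      · have hab' : M.smul (a * b) x ∈ N := by rw [M.mul_smul]; exact hab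
        simp only [dif_pos hab', dif_neg hb, dif_pos hab]
      · have hab' : M.smul (a * b) x ∉ N := by rw [M.mul_smul]; exact hab
        simp only [dif_neg hab', dif_neg hb, dif_neg hab]
        exact Subtype.ext (M.mul_smul a b x)
  zero_smul := by
    classical
    rintro ⟨x, hx⟩
    have h0 : M.smul 0 x ∈ N := by rw [M.zero_smul]; exact h.1
    simp only [dif_pos h0]
  smul_zero := by
    classical
    intro a
    have h0 : M.smul a M.zero ∈ N := by rw [M.smul_zero]; exact h.1
    simp only [dif_pos h0]

/-- A morphism of `A`-modules: a pointed map compatible with the `A`-action. -/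
structure Hom (M N : FModule A) where
  toFun : M.carrier → N.carrier
  map_zero : toFun M.zero = N.zero
  map_smul : ∀ a m, toFun (M.smul a m) = N.smul a (toFun m)

/-- A morphism is normal if every fibre other than the fibre of the basepoint has at
most one element. -/
def Hom.Normal {M N : FModule A} (f : Hom M N) : Prop :=
  ∀ m m', f.toFun m = f.toFun m' → f.toFun m ≠ N.zero → m = m'

/-- Composition of morphisms. -/
def Hom.comp {M N L : FModule A} (g : Hom N L) (f : Hom M N) : Hom M L where
  toFun := g.toFun ∘ f.toFun
  map_zero := by
    show g.toFun (f.toFun M.zero) = L.zero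
    rw [f.map_zero, g.map_zero]
  map_smul a m := by
    show g.toFun (f.toFun (M.smul a m)) = L.smul a (g.toFun (f.toFun m))
    rw [f.map_smul, g.map_smul]

/-- An isomorphism of `A`-modules. -/
structure Iso (M N : FModule A) where
  toEquiv : M.carrier ≃ N.carrier
  map_zero : toEquiv M.zero = N.zero
  map_smul : ∀ a m, toEquiv (M.smul a m) = N.smul a (toEquiv m)

def Iso.refl (M : FModule A) : Iso M M := ⟨Equiv.refl _, rfl, fun _ _ => rfl⟩

def Iso.symm {M N : FModule A} (e : Iso M N) : Iso N M where
  toEquiv := e.toEquiv.symm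
  map_zero := by rw [Equiv.symm_apply_eq, e.map_zero]
  map_smul a m := by
    apply e.toEquiv.injective
    rw [e.map_smul, Equiv.apply_symm_apply, Equiv.apply_symm_apply]

def Iso.trans {M N L : FModule A} (e : Iso M N) (f : Iso N L) : Iso M L where
  toEquiv := e.toEquiv.trans f.toEquiv
  map_zero := by
    simp only [Equiv.trans_apply, e.map_zero, f.map_zero]
  map_smul a m := by
    simp only [Equiv.trans_apply, e.map_smul, f.map_smul]

/-- The wedge sum (direct sum, coproduct) `M ⊕ N` of two `A`-modules, realized as the
subset of `M × N` of pairs with at least one coordinate equal to the basepoint. -/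
def wedge (M N : FModule A) : FModule A where
  carrier := {p : M.carrier × N.carrier // p.1 = M.zero ∨ p.2 = N.zero}
  zero := ⟨(M.zero, N.zero), Or.inl rfl⟩
  smul a p := ⟨(M.smul a p.1.1, N.smul a p.1.2), by
    rcases p.2 with h1 | h2
    · exact Or.inl (by rw [h1, M.smul_zero])
    · exact Or.inr (by rw [h2, N.smul_zero])⟩
  one_smul p := Subtype.ext (Prod.ext (M.one_smul _) (N.one_smul _))
  mul_smul a b p := Subtype.ext (Prod.ext (M.mul_smul _ _ _) (N.mul_smul _ _ _))
  zero_smul p := Subtype.ext (Prod.ext (M.zero_smul _) (N.zero_smul _))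
  smul_zero a := Subtype.ext (Prod.ext (M.smul_zero _) (N.smul_zero _))

/-- A module `M` is of type α if every `a ∈ A` acts on `M` by a normal map of pointed
sets, i.e. `a•m₁ = a•m₂` implies `m₁ = m₂` or `a•m₁ = a•m₂ = 0`. -/
def TypeAlpha (M : FModule A) : Prop :=
  ∀ (a : A) (m₁ m₂ : M.carrier),
    M.smul a m₁ = M.smul a m₂ → m₁ = m₂ ∨ M.smul a m₁ = M.zero

/-- A module is indecomposable if it is nonzero and admits no decomposition as a wedge
sum (internally: a pair of submodules covering `M` and meeting only in `0`) with both
pieces nonzero. -/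
def Indecomposable (M : FModule A) : Prop :=
  (∃ m : M.carrier, m ≠ M.zero) ∧
  ∀ P Q : Set M.carrier, M.IsSubmod P → M.IsSubmod Q → P ∪ Q = Set.univ →
    P ∩ Q ⊆ {M.zero} → P = {M.zero} ∨ Q = {M.zero}

end FModule
namespace FModule

variable {A : Type v} [MonoidWithZero A]

section Graded

variable {Γ : Type*} [AddCommMonoid Γ]

/-- `dA` is a `Γ`-grading of the monoid `A`: every nonzero element has a degree,
`1 ∈ A₀`, and `A_γ · A_δ ⊆ A_{γ+δ}`. -/
def IsMonoidGrading (dA : A → Γ) : Prop :=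
  dA 1 = 0 ∧ ∀ a b : A, a * b ≠ 0 → dA (a * b) = dA a + dA b

/-- `g` is a grading of the `A`-module `M` compatible with the grading `dA` of `A`:
`0_M ∈ M₀` and `A_γ · M_δ ⊆ M_{γ+δ}`. -/
def IsGrading (dA : A → Γ) (M : FModule A) (g : M.carrier → Γ) : Prop :=
  g M.zero = 0 ∧ ∀ (a : A) (m : M.carrier),
    M.smul a m ≠ M.zero → g (M.smul a m) = dA a + g m

/-- `M` admits a grading. -/
def AdmitsGrading (dA : A → Γ) (M : FModule A) : Prop :=
  ∃ g : M.carrier → Γ, IsGrading dA M g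

end Graded

section Spec

/-- An ideal of a monoid. -/
def IsMonIdeal (I : Set A) : Prop := ∀ a ∈ I, ∀ b : A, b * a ∈ I

/-- A prime ideal of a monoid: a proper ideal with `xy ∈ p → x ∈ p ∨ y ∈ p`. -/
def IsPrimeIdeal (p : Set A) : Prop :=
  IsMonIdeal p ∧ p ≠ Set.univ ∧ ∀ x y : A, x * y ∈ p → x ∈ p ∨ y ∈ p

variable (A) in
/-- The prime spectrum of the monoid `A`. -/
def MSpec := {p : Set A // IsPrimeIdeal p}

/-- The closed subset `V(I)` of `MSpec A` determined by a set `I ⊆ A`. -/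
def zeroLocus (I : Set A) : Set (MSpec A) := {p | I ⊆ p.1}

/-- Closed subsets of `MSpec A`. -/
def IsClosedM (Z : Set (MSpec A)) : Prop := ∃ I : Set A, IsMonIdeal I ∧ Z = zeroLocus I

/-- The annihilator of an `A`-module. -/
def Ann (M : FModule A) : Set A := {a : A | ∀ m : M.carrier, M.smul a m = M.zero}

/-- The (scheme-theoretic) support of the module `M`: `Supp M = V(Ann M)`. -/
def Supp (M : FModule A) : Set (MSpec A) := zeroLocus (Ann M)

/-- The radical of a set in a monoid. -/
def mradical (I : Set A) : Set A := {a : A | ∃ k : ℕ, 0 < k ∧ a ^ k ∈ I}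

end Spec

end FModule
namespace FModule

variable (A : Type v) [MonoidWithZero A]

/-- A finite `A`-module, bundled. -/
def FinFMod := {M : FModule.{0} A // Finite M.carrier}

variable {A}

/-- The submodule, as a finite bundled module. -/
def FinFMod.sub (M : FinFMod A) (N : Set M.1.carrier) (h : M.1.IsSubmod N) : FinFMod A :=
  ⟨M.1.sub N h, by haveI := M.2; exact inferInstanceAs (Finite ↥N)⟩

/-- The quotient, as a finite bundled module. -/
noncomputable def FinFMod.quot (M : FinFMod A) (N : Set M.1.carrier) (h : M.1.IsSubmod N) :
    FinFMod A :=
  ⟨M.1.quot N h, by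
    haveI := M.2
    exact inferInstanceAs (Finite {x : M.1.carrier // x = M.1.zero ∨ x ∉ N})⟩

/-- The wedge sum, as a finite bundled module. -/
def FinFMod.wedge (M N : FinFMod A) : FinFMod A :=
  ⟨M.1.wedge N.1, by
    haveI := M.2; haveI := N.2
    exact inferInstanceAs
      (Finite {p : M.1.carrier × N.1.carrier // p.1 = M.1.zero ∨ p.2 = N.1.zero})⟩

/-- The zero module. -/
def FinFMod.zeroMod : FinFMod A :=
  ⟨⟨PUnit, PUnit.unit, fun _ _ => PUnit.unit, fun _ => rfl, fun _ _ _ => rfl,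
    fun _ => rfl, fun _ => rfl⟩, inferInstance⟩

variable (A)

/-- Isomorphism classes of finite `A`-modules. -/
instance fmodSetoid : Setoid (FinFMod A) where
  r M N := Nonempty (Iso M.1 N.1)
  iseqv := ⟨fun M => ⟨Iso.refl M.1⟩, fun ⟨e⟩ => ⟨e.symm⟩, fun ⟨e⟩ ⟨f⟩ => ⟨e.trans f⟩⟩

/-- The set of isomorphism classes of finite `A`-modules. -/
def IsoCl := Quotient (fmodSetoid A)

variable {A}

/-- The isomorphism class of a finite module. -/
def clsOf (M : FinFMod A) : IsoCl A := Quotient.mk _ M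

/-- The collection of submodules of a module. -/
def Submods (M : FModule A) := {N : Set M.carrier // M.IsSubmod N}

open scoped Classical in
/-- The Hall algebra convolution product:
`(f ⋆ g)(M) = ∑_{N ⊆ M} f(M/N) g(N)`, the (finite) sum being over all submodules. -/
noncomputable def hallMul (f g : IsoCl A → ℚ) : IsoCl A → ℚ := fun c =>
  ∑ᶠ N : Submods (Quotient.out c).1,
    f (clsOf ((Quotient.out c).quot N.1 N.2)) * g (clsOf ((Quotient.out c).sub N.1 N.2))

open scoped Classical in
/-- The delta function supported at a single isomorphism class. -/
noncomputable def deltaF (c : IsoCl A) : IsoCl A → ℚ := fun d => if d = c then 1 else 0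

/-- Finitely supported functions (the underlying space of the Hall algebra). -/
def FinSupp (f : IsoCl A → ℚ) : Prop := (Function.support f).Finite

/-- Finitely supported functions of two variables. -/
def FinSupp₂ (F : IsoCl A → IsoCl A → ℚ) : Prop :=
  (Function.support (Function.uncurry F)).Finite

/-- The Hall algebra coproduct, in coordinates: `Δ(f)(M, N) = f(M ⊕ N)`. -/
noncomputable def coprodF (f : IsoCl A → ℚ) : IsoCl A → IsoCl A → ℚ := fun c d =>
  f (clsOf ((Quotient.out c).wedge (Quotient.out d)))

/-- The componentwise convolution product on two-variable functions
(the product on `H ⊗ H` in coordinates). -/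
noncomputable def hallMul₂ (F G : IsoCl A → IsoCl A → ℚ) : IsoCl A → IsoCl A → ℚ :=
  fun c d =>
    ∑ᶠ N : Submods (Quotient.out c).1, ∑ᶠ P : Submods (Quotient.out d).1,
      F (clsOf ((Quotient.out c).quot N.1 N.2)) (clsOf ((Quotient.out d).quot P.1 P.2)) *
      G (clsOf ((Quotient.out c).sub N.1 N.2)) (clsOf ((Quotient.out d).sub P.1 P.2))

/-- The dimension of an isomorphism class: `dim M = |M| - 1`. -/
noncomputable def dimCl (c : IsoCl A) : ℕ := Nat.card (Quotient.out c).1.carrier - 1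

/-- The counit: evaluation at the class of the zero module. -/
noncomputable def counitF (f : IsoCl A → ℚ) : ℚ := f (clsOf (FinFMod.zeroMod))

end FModule
namespace FModule

variable {A : Type v} [MonoidWithZero A] {Γ : Type*} [AddCommMonoid Γ]

/-- An isomorphism class of finite `A`-modules admitting a `Γ`-grading. -/
def ClAdmitsGrading (dA : A → Γ) (c : IsoCl A) : Prop :=
  AdmitsGrading dA (Quotient.out c).1

/-- Membership in `J^{gr} ⊆ H_A`: the span of the delta functions of the classes that
do NOT admit a grading, i.e. the finitely supported functions vanishing on all classes
admitting a grading. -/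
def MemJgr (dA : A → Γ) (f : IsoCl A → ℚ) : Prop :=
  FinSupp f ∧ ∀ c : IsoCl A, ClAdmitsGrading dA c → f c = 0

end FModule

namespace FModule

variable {A : Type v} [MonoidWithZero A]

section AuxGrading

variable {Γ : Type*} [AddCommMonoid Γ] (dA : A → Γ)

theorem admits_of_iso {M N : FModule A} (e : Iso M N)
    (h : AdmitsGrading dA M) : AdmitsGrading dA N := by
  obtain ⟨g, hg0, hgs⟩ := h
  refine ⟨fun x => g (e.symm.toEquiv x), ?_, ?_⟩
  · show g (e.symm.toEquiv N.zero) = 0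
    rw [e.symm.map_zero, hg0]
  · intro a m hm
    show g (e.symm.toEquiv (N.smul a m)) = dA a + g (e.symm.toEquiv m)
    rw [e.symm.map_smul]
    refine hgs a _ (fun hcon => hm ?_)
    apply e.symm.toEquiv.injective
    rw [e.symm.map_smul, e.symm.map_zero]
    exact hcon

theorem out_iso (M : FinFMod A) : Nonempty (Iso (Quotient.out (clsOf M)).1 M.1) :=
  Quotient.exact (Quotient.out_eq (clsOf M))

theorem clAdmits_clsOf {M : FinFMod A} (h : AdmitsGrading dA M.1) :
    ClAdmitsGrading dA (clsOf M) := by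
  obtain ⟨e⟩ := out_iso M
  exact admits_of_iso dA e.symm h

theorem admits_sub {M : FModule A} {N : Set M.carrier} (hN : M.IsSubmod N)
    (h : AdmitsGrading dA M) : AdmitsGrading dA (M.sub N hN) := by
  obtain ⟨g, hg0, hgs⟩ := h
  refine ⟨fun x => g x.1, hg0, ?_⟩
  intro a m hm
  exact hgs a m.1 (fun hc => hm (Subtype.ext hc))

theorem admits_quot {M : FModule A} {N : Set M.carrier} (hN : M.IsSubmod N)
    (h : AdmitsGrading dA M) : AdmitsGrading dA (M.quot N hN) := by
  classical
  obtain ⟨g, hg0, hgs⟩ := h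
  refine ⟨fun x => g x.1, hg0, ?_⟩
  intro a m hm
  have hsm : (M.quot N hN).smul a m =
      if hmem : M.smul a m.1 ∈ N then ⟨M.zero, Or.inl rfl⟩
      else ⟨M.smul a m.1, Or.inr hmem⟩ := rfl
  by_cases hmem : M.smul a m.1 ∈ N
  · exact absurd (by rw [hsm]; exact dif_pos hmem) hm
  · show g ((M.quot N hN).smul a m).1 = dA a + g m.1
    rw [hsm]
    exact (congrArg (fun x : {x : M.carrier // x = M.zero ∨ x ∉ N} => g x.1)
      (dif_neg hmem)).trans (hgs a m.1 (fun hc => hmem (by rw [hc]; exact hN.1)))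

theorem admits_wedge {M N : FModule A} (hM : AdmitsGrading dA M)
    (hN : AdmitsGrading dA N) : AdmitsGrading dA (M.wedge N) := by
  classical
  obtain ⟨g1, hg10, hg1s⟩ := hM
  obtain ⟨g2, hg20, hg2s⟩ := hN
  refine ⟨fun p => if p.1.2 = N.zero then g1 p.1.1 else g2 p.1.2, ?_, ?_⟩
  · show (if (N.zero : N.carrier) = N.zero then g1 M.zero else g2 N.zero) = 0
    rw [if_pos rfl, hg10]
  · intro a p hp
    show (if N.smul a p.1.2 = N.zero then g1 (M.smul a p.1.1) else g2 (N.smul a p.1.2))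
        = dA a + (if p.1.2 = N.zero then g1 p.1.1 else g2 p.1.2)
    by_cases hz : p.1.2 = N.zero
    · have h2 : N.smul a p.1.2 = N.zero := by rw [hz, N.smul_zero]
      rw [if_pos h2, if_pos hz]
      refine hg1s a p.1.1 (fun hc => hp ?_)
      exact Subtype.ext (Prod.ext hc h2)
    · have h1 : p.1.1 = M.zero := p.2.resolve_right hz
      have h1' : M.smul a p.1.1 = M.zero := by rw [h1, M.smul_zero]
      by_cases hz2 : N.smul a p.1.2 = N.zero
      · exact absurd (Subtype.ext (Prod.ext h1' hz2)) hp
      · rw [if_neg hz2, if_neg hz]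
        exact hg2s a p.1.2 hz2

end AuxGrading

section AuxCard

theorem card_out (M : FinFMod A) :
    Nat.card (Quotient.out (clsOf M)).1.carrier = Nat.card M.1.carrier := by
  obtain ⟨e⟩ := out_iso M
  exact Nat.card_congr e.toEquiv

theorem card_sub_quot (M : FinFMod A) (N : Set M.1.carrier) (h : M.1.IsSubmod N) :
    Nat.card M.1.carrier ≤
      Nat.card (M.quot N h).1.carrier + Nat.card (M.sub N h).1.carrier := by
  classical
  haveI := M.2
  haveI : Finite (M.quot N h).1.carrier := (M.quot N h).2
  haveI : Finite (M.sub N h).1.carrier := (M.sub N h).2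
  have hinj : Function.Injective (fun m : M.1.carrier =>
      if hm : m ∈ N
      then (Sum.inr ⟨m, hm⟩ : (M.quot N h).1.carrier ⊕ (M.sub N h).1.carrier)
      else Sum.inl ⟨m, Or.inr hm⟩) := by
    intro m m' hmm
    dsimp only at hmm
    by_cases h1 : m ∈ N <;> by_cases h2 : m' ∈ N
    · rw [dif_pos h1, dif_pos h2] at hmm
      exact congrArg Subtype.val (Sum.inr_injective hmm)
    · rw [dif_pos h1, dif_neg h2] at hmm
      cases hmm
    · rw [dif_neg h1, dif_pos h2] at hmm
      cases hmm
    · rw [dif_neg h1, dif_neg h2] at hmm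
      exact congrArg Subtype.val (Sum.inl_injective hmm)
  calc Nat.card M.1.carrier
      ≤ Nat.card ((M.quot N h).1.carrier ⊕ (M.sub N h).1.carrier) :=
        Nat.card_le_card_of_injective _ hinj
    _ = _ := Nat.card_sum

theorem card_le_wedge_left (M N : FinFMod A) :
    Nat.card M.1.carrier ≤ Nat.card (M.wedge N).1.carrier := by
  haveI := M.2
  haveI : Finite (M.wedge N).1.carrier := (M.wedge N).2
  refine Nat.card_le_card_of_injective
    (fun m => (⟨(m, N.1.zero), Or.inr rfl⟩ : (M.wedge N).1.carrier)) ?_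
  intro m m' hmm
  exact congrArg (fun p => p.1.1) hmm

theorem card_le_wedge_right (M N : FinFMod A) :
    Nat.card N.1.carrier ≤ Nat.card (M.wedge N).1.carrier := by
  haveI := N.2
  haveI : Finite (M.wedge N).1.carrier := (M.wedge N).2
  refine Nat.card_le_card_of_injective
    (fun m => (⟨(M.1.zero, m), Or.inl rfl⟩ : (M.wedge N).1.carrier)) ?_
  intro m m' hmm
  exact congrArg (fun p => p.1.2) hmm

end AuxCard

section AuxFinite

theorem finite_card_le (A : Type v) [MonoidWithZero A] [hFG : Monoid.FG A] (n : ℕ) :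
    {c : IsoCl A | Nat.card (Quotient.out c).1.carrier ≤ n}.Finite := by
  classical
  obtain ⟨S, hS⟩ := hFG.fg_top
  apply Set.finite_coe_iff.mp
  set T := {c : IsoCl A | Nat.card (Quotient.out c).1.carrier ≤ n} with hT
  haveI : ∀ c : IsoCl A, Finite (Quotient.out c).1.carrier := fun c => (Quotient.out c).2
  let k : IsoCl A → ℕ := fun c => Nat.card (Quotient.out c).1.carrier
  let e : ∀ c : IsoCl A, (Quotient.out c).1.carrier ≃ Fin (k c) :=
    fun c => Finite.equivFin _
  let F : T → Fin (n+1) × Fin (n+1) × (S → Fin (n+1) → Fin (n+1)) := fun c =>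
    ⟨⟨k c.1, Nat.lt_succ_of_le c.2⟩,
     Fin.castLE (Nat.le_succ_of_le c.2) (e c.1 (Quotient.out c.1).1.zero),
     fun s m => if h : m.1 < k c.1
       then Fin.castLE (Nat.le_succ_of_le c.2)
         (e c.1 ((Quotient.out c.1).1.smul s.1 ((e c.1).symm ⟨m.1, h⟩)))
       else m⟩
  refine Finite.of_injective F ?_
  rintro c c' hcc
  have hk : k c.1 = k c'.1 := congrArg (fun d => d.1.1) hcc
  have h0 : ((e c.1) (Quotient.out c.1).1.zero).1
      = ((e c'.1) (Quotient.out c'.1).1.zero).1 := congrArg (fun d => d.2.1.1) hcc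
  have hact := congrArg (fun d => d.2.2) hcc
  set M := (Quotient.out c.1).1 with hM
  set M' := (Quotient.out c'.1).1 with hM'
  let ε : M.carrier ≃ M'.carrier := (e c.1).trans ((finCongr hk).trans (e c'.1).symm)
  have hε : ∀ m : M.carrier, ε m = (e c'.1).symm ⟨((e c.1) m).1, hk ▸ ((e c.1) m).2⟩ := by
    intro m
    show (e c'.1).symm (finCongr hk ((e c.1) m)) = _
    congr 1
  have hεzero : ε M.zero = M'.zero := by
    rw [hε, Equiv.symm_apply_eq]
    exact Fin.ext h0
  have hgen : ∀ s ∈ S, ∀ m : M.carrier, ε (M.smul s m) = M'.smul s (ε m) := by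
    intro s hs m
    set p : Fin (n+1) := Fin.castLE (Nat.le_succ_of_le c.2) ((e c.1) m) with hp
    have hact' : (fun (s : S) (m : Fin (n+1)) =>
        if h : m.1 < k c.1
        then Fin.castLE (Nat.le_succ_of_le c.2)
          ((e c.1) (M.smul s.1 ((e c.1).symm ⟨m.1, h⟩)))
        else m)
      = (fun (s : S) (m : Fin (n+1)) =>
        if h : m.1 < k c'.1
        then Fin.castLE (Nat.le_succ_of_le c'.2)
          ((e c'.1) (M'.smul s.1 ((e c'.1).symm ⟨m.1, h⟩)))
        else m) := hact
    have hpt := congrFun (congrFun hact' ⟨s, hs⟩) p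
    have hlt : p.1 < k c.1 := ((e c.1) m).2
    have hlt' : p.1 < k c'.1 := hk ▸ hlt
    rw [dif_pos hlt, dif_pos hlt'] at hpt
    have hval := congrArg Fin.val hpt
    simp only [Fin.coe_castLE] at hval
    have hsymm1 : (e c.1).symm ⟨p.1, hlt⟩ = m := by
      apply (e c.1).injective
      rw [Equiv.apply_symm_apply]
      exact Fin.ext rfl
    have hsymm2 : (e c'.1).symm ⟨p.1, hlt'⟩ = ε m := by
      rw [hε m]
      congr 1
    rw [hsymm1, hsymm2] at hval
    rw [hε, Equiv.symm_apply_eq]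
    exact Fin.ext hval
  let T' : Submonoid A :=
    { carrier := {a : A | ∀ m : M.carrier, ε (M.smul a m) = M'.smul a (ε m)}
      one_mem' := by intro m; rw [M.one_smul, M'.one_smul]
      mul_mem' := by
        intro a b ha hb m
        rw [M.mul_smul, M'.mul_smul, ha, hb] }
  have hall : ∀ a : A, ∀ m : M.carrier, ε (M.smul a m) = M'.smul a (ε m) := by
    intro a
    have h1 : Submonoid.closure (↑S : Set A) ≤ T' := Submonoid.closure_le.mpr
      (fun s hs => hgen s hs)
    have h2 : a ∈ Submonoid.closure (↑S : Set A) := hS.symm ▸ Submonoid.mem_top a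
    exact h1 h2
  have : Nonempty (Iso M M') := ⟨⟨ε, hεzero, fun a m => hall a m⟩⟩
  apply Subtype.ext
  exact (Quotient.out_eq c.1).symm.trans
    ((Quotient.sound (s := fmodSetoid A) this).trans (Quotient.out_eq c'.1))

end AuxFinite

section AuxSupp

theorem hallMul_ne_zero {f g : IsoCl A → ℚ} {c : IsoCl A} (h : hallMul f g c ≠ 0) :
    ∃ N : Submods (Quotient.out c).1,
      f (clsOf ((Quotient.out c).quot N.1 N.2)) ≠ 0 ∧
      g (clsOf ((Quotient.out c).sub N.1 N.2)) ≠ 0 := by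
  by_contra hcon
  push_neg at hcon
  apply h
  apply finsum_eq_zero_of_forall_eq_zero
  intro N
  rcases eq_or_ne (f (clsOf ((Quotient.out c).quot N.1 N.2))) 0 with h1 | h1
  · rw [h1, zero_mul]
  · rw [hcon N h1, mul_zero]

theorem exists_bound {f : IsoCl A → ℚ} (hf : FinSupp f) :
    ∃ n : ℕ, ∀ c ∈ Function.support f, Nat.card (Quotient.out c).1.carrier ≤ n := by
  obtain ⟨n, hn⟩ := (hf.image fun c => Nat.card (Quotient.out c).1.carrier).bddAbove
  exact ⟨n, fun c hc => hn (Set.mem_image_of_mem _ hc)⟩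

theorem finSupp_hallMul [Monoid.FG A] {f g : IsoCl A → ℚ} (hf : FinSupp f)
    (hg : FinSupp g) : FinSupp (hallMul f g) := by
  obtain ⟨n₁, hn₁⟩ := exists_bound hf
  obtain ⟨n₂, hn₂⟩ := exists_bound hg
  apply (finite_card_le A (n₁ + n₂)).subset
  intro c hc
  obtain ⟨N, hfN, hgN⟩ := hallMul_ne_zero hc
  have h1 := hn₁ _ hfN
  have h2 := hn₂ _ hgN
  have hq := card_out ((Quotient.out c).quot N.1 N.2)
  have hs := card_out ((Quotient.out c).sub N.1 N.2)
  have hle := card_sub_quot (Quotient.out c) N.1 N.2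
  simp only [Set.mem_setOf_eq]
  omega

theorem finSupp₂_coprod [Monoid.FG A] {f : IsoCl A → ℚ} (hf : FinSupp f) :
    FinSupp₂ (coprodF f) := by
  obtain ⟨n, hn⟩ := exists_bound hf
  apply ((finite_card_le A n).prod (finite_card_le A n)).subset
  rintro ⟨c, d⟩ hcd
  have hne : f (clsOf ((Quotient.out c).wedge (Quotient.out d))) ≠ 0 := hcd
  have hb := hn _ hne
  have hw := card_out ((Quotient.out c).wedge (Quotient.out d))
  have h1 := card_le_wedge_left (Quotient.out c) (Quotient.out d)
  have h2 := card_le_wedge_right (Quotient.out c) (Quotient.out d)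
  refine Set.mem_prod.mpr ⟨?_, ?_⟩ <;> simp only [Set.mem_setOf_eq] <;> omega

end AuxSupp

end FModule

open FModule in
/-- **`J^{gr}` is a Hopf ideal of the Hall algebra `H_A`** for a finitely generated
`Γ`-graded monoid `A`: a two-sided ideal for the convolution product, a co-ideal for
the coproduct, contained in the augmentation ideal. -/
theorem Jgr_is_hopf_ideal (A : Type v) [MonoidWithZero A] [Monoid.FG A]
    (Γ : Type*) [AddCommMonoid Γ] (dA : A → Γ) (hdA : IsMonoidGrading dA) :
    -- contained in the augmentation ideal
    (∀ f : IsoCl A → ℚ, MemJgr dA f → counitF f = 0) ∧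
    -- two-sided ideal for ⋆
    (∀ f g : IsoCl A → ℚ, MemJgr dA f → FinSupp g → MemJgr dA (hallMul f g)) ∧
    (∀ f g : IsoCl A → ℚ, FinSupp f → MemJgr dA g → MemJgr dA (hallMul f g)) ∧
    -- co-ideal: Δ(J^{gr}) ⊆ J^{gr} ⊗ H + H ⊗ J^{gr}
    (∀ f : IsoCl A → ℚ, MemJgr dA f →
      ∃ F G : IsoCl A → IsoCl A → ℚ, FinSupp₂ F ∧ FinSupp₂ G ∧
        (∀ c d : IsoCl A, coprodF f c d = F c d + G c d) ∧
        (∀ c d : IsoCl A, ClAdmitsGrading dA c → F c d = 0) ∧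
        (∀ c d : IsoCl A, ClAdmitsGrading dA d → G c d = 0)) := by
  classical
  refine ⟨?_, ?_, ?_, ?_⟩
  · -- counit
    intro f hf
    apply hf.2
    apply clAdmits_clsOf
    refine ⟨fun _ => 0, rfl, ?_⟩
    intro a m hm
    exact absurd rfl hm
  · -- left ideal
    intro f g hf hg
    refine ⟨finSupp_hallMul hf.1 hg, ?_⟩
    intro c hc
    apply finsum_eq_zero_of_forall_eq_zero
    intro N
    rw [hf.2 _ (clAdmits_clsOf dA (admits_quot dA N.2 hc)), zero_mul]
  · -- right ideal
    intro f g hf hg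
    refine ⟨finSupp_hallMul hf hg.1, ?_⟩
    intro c hc
    apply finsum_eq_zero_of_forall_eq_zero
    intro N
    rw [hg.2 _ (clAdmits_clsOf dA (admits_sub dA N.2 hc)), mul_zero]
  · -- co-ideal
    intro f hf
    refine ⟨fun c d => if ClAdmitsGrading dA c then 0 else coprodF f c d,
      fun c d => if ClAdmitsGrading dA c then coprodF f c d else 0, ?_, ?_, ?_, ?_, ?_⟩
    · apply (finSupp₂_coprod hf.1).subset
      rintro ⟨c, d⟩ hcd
      simp only [Function.mem_support, Function.uncurry_apply_pair] at hcd ⊢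
      intro hz
      apply hcd
      by_cases hcg : ClAdmitsGrading dA c
      · rw [if_pos hcg]
      · rw [if_neg hcg, hz]
    · apply (finSupp₂_coprod hf.1).subset
      rintro ⟨c, d⟩ hcd
      simp only [Function.mem_support, Function.uncurry_apply_pair] at hcd ⊢
      intro hz
      apply hcd
      by_cases hcg : ClAdmitsGrading dA c
      · rw [if_pos hcg, hz]
      · rw [if_neg hcg]
    · intro c d
      show coprodF f c d = (if ClAdmitsGrading dA c then 0 else coprodF f c d)
        + (if ClAdmitsGrading dA c then coprodF f c d else 0)
      by_cases hcg : ClAdmitsGrading dA c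
      · rw [if_pos hcg, if_pos hcg, zero_add]
      · rw [if_neg hcg, if_neg hcg, add_zero]
    · intro c d hcg
      show (if ClAdmitsGrading dA c then (0 : ℚ) else coprodF f c d) = 0
      rw [if_pos hcg]
    · intro c d hd
      show (if ClAdmitsGrading dA c then coprodF f c d else (0 : ℚ)) = 0
      by_cases hcg : ClAdmitsGrading dA c
      · rw [if_pos hcg]
        exact hf.2 _ (clAdmits_clsOf dA (admits_wedge dA hcg hd))
      · rw [if_neg hcg]
end

section
/- Let S ⊆ ℤⁿ be an n-dimensional skew shape and M_S the associated module over the free commutative monoid ⟨x₁,…,x_n⟩. Then M_S is indecomposable if and only if S is connected; more generally, if S = S₁ ⊔ S₂ ⊔ … ⊔ S_k is the decomposition of S into connected components, then M_S = M_{S₁} ⊕ M_{S₂} ⊕ … ⊕ M_{S_k} is the decomposition of M_S into indecomposable direct summands. -/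
universe u v

/-! ### The free commutative monoid on `n` generators and skew shapes -/

/-- The free commutative monoid `⟨x₁,…,x_n⟩ = 𝔽₁⟨x₁,…,x_n⟩` on `n` generators with a
zero adjoined: monomials `x^e`, `e ∈ ℤⁿ_{≥0}`, together with `0`. -/
def FreeCM (n : ℕ) := WithZero (Multiplicative (Fin n → ℕ))

instance (n : ℕ) : CommMonoidWithZero (FreeCM n) :=
  inferInstanceAs (CommMonoidWithZero (WithZero (Multiplicative (Fin n → ℕ))))

instance (n : ℕ) : NoZeroDivisors (FreeCM n) :=
  inferInstanceAs (NoZeroDivisors (WithZero (Multiplicative (Fin n → ℕ))))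

/-- The monomial `x^e`. -/
def monomial {n : ℕ} (e : Fin n → ℕ) : FreeCM n :=
  ((Multiplicative.ofAdd e : Multiplicative (Fin n → ℕ)) : WithZero (Multiplicative (Fin n → ℕ)))

instance (n : ℕ) : Nontrivial (FreeCM n) :=
  inferInstanceAs (Nontrivial (WithZero (Multiplicative (Fin n → ℕ))))

open Classical in
/-- The canonical `ℤⁿ`-grading of `FreeCM n`, `deg xᵢ = eᵢ` (the value at `0` is irrelevant). -/
noncomputable def freeCMdeg {n : ℕ} (a : FreeCM n) : Fin n → ℤ :=
  if h : a = 0 then 0 else fun i => ((Multiplicative.toAdd (WithZero.unzero h)) i : ℤ)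

/-- The maximal ideal `m = (x₁, …, x_n)` of `FreeCM n`: all non-units. -/
def mIdeal (n : ℕ) : Set (FreeCM n) := {a | a ≠ 1}

/-- The coercion `ℤⁿ_{≥0} → ℤⁿ`. -/
def coeE {n : ℕ} (e : Fin n → ℕ) : Fin n → ℤ := fun i => (e i : ℤ)

/-- An `n`-dimensional skew shape: a finite convex sub-poset of `ℤⁿ` with the
componentwise partial order. -/
structure SkewShape (n : ℕ) where
  carrier : Set (Fin n → ℤ)
  finite : carrier.Finite
  convex : ∀ ⦃x y z : Fin n → ℤ⦄, x ∈ carrier → y ∈ carrier → x ≤ z → z ≤ y → z ∈ carrier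

namespace SkewShape

variable {n : ℕ}

/-- Direct comparability of two points of the shape. -/
def rel (S : SkewShape n) (x y : Fin n → ℤ) : Prop :=
  x ∈ S.carrier ∧ y ∈ S.carrier ∧ (x ≤ y ∨ y ≤ x)

/-- A skew shape is connected if it is nonempty and, as a poset, any two of its points
are joined by a chain of comparabilities (equivalently, a lattice path) inside the shape. -/
def Connected (S : SkewShape n) : Prop :=
  S.carrier.Nonempty ∧
    ∀ x ∈ S.carrier, ∀ y ∈ S.carrier, Relation.ReflTransGen S.rel x y

open Classical in
/-- The action of the monomial `x^e` on `S ⊔ {0}`. -/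
noncomputable def act (S : SkewShape n) (e : Fin n → ℕ) :
    Option ↥S.carrier → Option ↥S.carrier
  | none => none
  | some s => if h : s.1 + coeE e ∈ S.carrier then some ⟨s.1 + coeE e, h⟩ else none

theorem act_zero (S : SkewShape n) (m : Option ↥S.carrier) : S.act 0 m = m := by
  classical
  cases m with
  | none => rfl
  | some s =>
    have he : s.1 + coeE (0 : Fin n → ℕ) = s.1 := by
      funext i; simp [coeE]
    show (if h : s.1 + coeE 0 ∈ S.carrier then _ else _) = _
    rw [dif_pos (by rw [he]; exact s.2)]
    exact congrArg some (Subtype.ext he)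

theorem act_add (S : SkewShape n) (e f : Fin n → ℕ) (m : Option ↥S.carrier) :
    S.act (e + f) m = S.act e (S.act f m) := by
  classical
  cases m with
  | none => rfl
  | some s =>
    have hef : s.1 + coeE (e + f) = s.1 + coeE f + coeE e := by
      funext i; simp [coeE]; ring
    by_cases hf : s.1 + coeE f ∈ S.carrier
    · show (if h : s.1 + coeE (e + f) ∈ S.carrier then _ else _)
        = S.act e (if h : s.1 + coeE f ∈ S.carrier then _ else _)
      rw [dif_pos hf]
      show _ = (if h : (s.1 + coeE f) + coeE e ∈ S.carrier then _ else _)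
      by_cases hefm : s.1 + coeE (e + f) ∈ S.carrier
      · rw [dif_pos hefm, dif_pos (by rw [← hef]; exact hefm)]
        exact congrArg some (Subtype.ext hef)
      · rw [dif_neg hefm, dif_neg (by rw [← hef]; exact hefm)]
    · have hnef : s.1 + coeE (e + f) ∉ S.carrier := by
        intro hmem
        apply hf
        refine S.convex s.2 hmem ?_ ?_
        · intro i
          simp only [coeE, Pi.add_apply]
          have : (0 : ℤ) ≤ (f i : ℤ) := Int.ofNat_nonneg _
          omega
        · intro i
          have h1 : s.1 i + coeE (e + f) i = s.1 i + coeE f i + coeE e i := by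
            have := congrFun hef i
            simpa using this
          have : (0 : ℤ) ≤ (e i : ℤ) := Int.ofNat_nonneg _
          simp only [coeE, Pi.add_apply] at h1 ⊢
          omega
      show (if h : s.1 + coeE (e + f) ∈ S.carrier then _ else _)
        = S.act e (if h : s.1 + coeE f ∈ S.carrier then _ else _)
      rw [dif_neg hnef, dif_neg hf]
      rfl

open Classical in
/-- The `FreeCM n`-module `M_S` attached to a skew shape `S`: underlying pointed set
`S ⊔ {0}`, with `x^e • s = s + e` if `s + e ∈ S` and `0` otherwise. -/
noncomputable def Mod (S : SkewShape n) : FModule (FreeCM n) where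
  carrier := Option ↥S.carrier
  zero := none
  smul a m := if h : a = 0 then none
    else S.act (Multiplicative.toAdd (WithZero.unzero h)) m
  one_smul m := by
    beta_reduce
    rw [dif_neg (one_ne_zero : (1 : FreeCM n) ≠ 0)]
    have h1 : WithZero.unzero (one_ne_zero : (1 : FreeCM n) ≠ 0) = 1 :=
      WithZero.unzero_coe _
    rw [h1]
    show S.act 0 m = m
    exact S.act_zero m
  mul_smul a b m := by
    beta_reduce
    by_cases ha : a = 0
    · subst ha
      rw [dif_pos (zero_mul b), dif_pos rfl]
    · by_cases hb : b = 0
      · subst hb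
        rw [dif_pos (mul_zero a), dif_pos rfl]
        cases m with
        | none =>
          rw [dif_neg ha]
          rfl
        | some s =>
          rw [dif_neg ha]
          rfl
      · have hab : a * b ≠ 0 := mul_ne_zero ha hb
        rw [dif_neg hab, dif_neg ha, dif_neg hb]
        have : WithZero.unzero hab = WithZero.unzero ha * WithZero.unzero hb :=
          WithZero.unzero_mul hab
        rw [this]
        have htoadd : Multiplicative.toAdd (WithZero.unzero ha * WithZero.unzero hb)
            = Multiplicative.toAdd (WithZero.unzero ha) + Multiplicative.toAdd (WithZero.unzero hb) := rfl
        rw [htoadd]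
        exact S.act_add _ _ m
  zero_smul m := dif_pos rfl
  smul_zero a := by
    beta_reduce
    by_cases ha : a = 0
    · rw [dif_pos ha]
    · rw [dif_neg ha]
      rfl

end SkewShape
namespace SkewShape

variable {n : ℕ}

/-- The subset of `M_S = S ⊔ {0}` determined by a set `T` of lattice points:
`{0} ∪ {s ∈ S | s ∈ T}`. -/
def msub (S : SkewShape n) (T : Set (Fin n → ℤ)) : Set (Option ↥S.carrier) :=
  insert none {x : Option ↥S.carrier | ∃ s : ↥S.carrier, s.1 ∈ T ∧ x = some s}

end SkewShape

/-! ### Auxiliary lemmas -/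

theorem FreeCM.zero_or_monomial {n : ℕ} (a : FreeCM n) : a = 0 ∨ ∃ e, a = monomial e := by
  by_cases h : a = 0
  · exact Or.inl h
  · refine Or.inr ⟨Multiplicative.toAdd (WithZero.unzero h), ?_⟩
    show a = ((Multiplicative.ofAdd (Multiplicative.toAdd (WithZero.unzero h)) :
      Multiplicative (Fin n → ℕ)) : WithZero (Multiplicative (Fin n → ℕ)))
    rw [ofAdd_toAdd]
    exact (WithZero.coe_unzero h).symm

theorem le_add_coeE {n : ℕ} (x : Fin n → ℤ) (e : Fin n → ℕ) : x ≤ x + coeE e := by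
  intro i
  simp only [Pi.add_apply, coeE]
  omega

namespace SkewShape

variable {n : ℕ}

theorem none_mem_msub (S : SkewShape n) (T : Set (Fin n → ℤ)) : none ∈ S.msub T :=
  Set.mem_insert _ _

theorem mem_msub_some {S : SkewShape n} {T : Set (Fin n → ℤ)} {s : ↥S.carrier} :
    some s ∈ S.msub T ↔ s.1 ∈ T := by
  constructor
  · rintro (h | ⟨s', hs', heq⟩)
    · exact absurd h (by simp)
    · injection heq with h'
      rw [h']; exact hs'
  · intro h; exact Or.inr ⟨s, h, rfl⟩

theorem act_none (S : SkewShape n) (e : Fin n → ℕ) : S.act e none = none := rfl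

open Classical in
theorem act_some (S : SkewShape n) (e : Fin n → ℕ) (s : ↥S.carrier) :
    S.act e (some s) =
      if h : s.1 + coeE e ∈ S.carrier then some ⟨s.1 + coeE e, h⟩ else none := rfl

open Classical in
theorem mod_smul_monomial (S : SkewShape n) (e : Fin n → ℕ) (m : Option ↥S.carrier) :
    S.Mod.smul (monomial e) m = S.act e m := by
  have hne : (monomial e : FreeCM n) ≠ 0 := WithZero.coe_ne_zero
  show (if h : (monomial e : FreeCM n) = 0 then none
    else S.act (Multiplicative.toAdd (WithZero.unzero h)) m) = _
  rw [dif_neg hne]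
  have h2 : WithZero.unzero hne = Multiplicative.ofAdd e := WithZero.unzero_coe _
  rw [h2]
  rfl

theorem rel_symm (S : SkewShape n) : Symmetric S.rel :=
  fun _ _ ⟨hx, hy, h⟩ => ⟨hy, hx, h.symm⟩

theorem mod_zero_eq (S : SkewShape n) : S.Mod.zero = none := rfl

/-- If `s ≤ t` in the shape, a suitable monomial carries `some s` to `some t`. -/
theorem act_up (S : SkewShape n) (s t : ↥S.carrier) (hle : s.1 ≤ t.1) :
    S.Mod.smul (monomial (fun i => (t.1 i - s.1 i).toNat)) (some s) = some t := by
  rw [mod_smul_monomial]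
  have h1 : s.1 + coeE (fun i => (t.1 i - s.1 i).toNat) = t.1 := by
    funext i
    have h2 : s.1 i ≤ t.1 i := hle i
    simp only [Pi.add_apply, coeE]
    omega
  rw [act_some, dif_pos (show s.1 + coeE _ ∈ S.carrier by rw [h1]; exact t.2)]
  exact congrArg some (Subtype.ext h1)

theorem submod_up (S : SkewShape n) {P : Set (Option ↥S.carrier)}
    (hP : S.Mod.IsSubmod P) (s t : ↥S.carrier) (hle : s.1 ≤ t.1)
    (hs : some s ∈ P) : some t ∈ P := by
  have := hP.2 (monomial (fun i => (t.1 i - s.1 i).toNat)) _ hs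
  rwa [act_up S s t hle] at this

theorem submod_step (S : SkewShape n) {P Q : Set (Option ↥S.carrier)}
    (hP : S.Mod.IsSubmod P) (hQ : S.Mod.IsSubmod Q)
    (hcov : P ∪ Q = Set.univ) (hint : P ∩ Q ⊆ {S.Mod.zero})
    (s t : ↥S.carrier) (hrel : s.1 ≤ t.1 ∨ t.1 ≤ s.1)
    (hs : some s ∈ P) : some t ∈ P := by
  rcases hrel with hle | hle
  · exact submod_up S hP s t hle hs
  · by_cases htP : some t ∈ P
    · exact htP
    · have htQ : some t ∈ Q := by
        have hu : some t ∈ P ∪ Q := hcov ▸ Set.mem_univ _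
        exact hu.resolve_left htP
      have hsQ : some s ∈ Q := submod_up S hQ t s hle htQ
      have h0 : some s ∈ ({S.Mod.zero} : Set _) := hint ⟨hs, hsQ⟩
      exact absurd (Set.mem_singleton_iff.mp h0) (Option.some_ne_none s)

theorem submod_chain (S : SkewShape n) {P Q : Set (Option ↥S.carrier)}
    (hP : S.Mod.IsSubmod P) (hQ : S.Mod.IsSubmod Q)
    (hcov : P ∪ Q = Set.univ) (hint : P ∩ Q ⊆ {S.Mod.zero})
    {x y : Fin n → ℤ} (h : Relation.ReflTransGen S.rel x y) :
    ∀ (hx : x ∈ S.carrier) (hy : y ∈ S.carrier), some ⟨x, hx⟩ ∈ P → some ⟨y, hy⟩ ∈ P := by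
  induction h with
  | refl => exact fun hx hy hm => hm
  | @tail b c hxb hbc ih =>
    intro hx hy hm
    exact submod_step S hP hQ hcov hint ⟨b, hbc.1⟩ ⟨c, hy⟩ hbc.2.2 (ih hx hbc.1 hm)

theorem msub_submod (S : SkewShape n) (T : Set (Fin n → ℤ))
    (hcl : ∀ (s : ↥S.carrier) (e : Fin n → ℕ), s.1 + coeE e ∈ S.carrier →
      s.1 ∈ T → s.1 + coeE e ∈ T) : S.Mod.IsSubmod (S.msub T) := by
  refine ⟨none_mem_msub S T, ?_⟩
  intro a m hm
  rcases FreeCM.zero_or_monomial a with rfl | ⟨e, rfl⟩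
  · rw [S.Mod.zero_smul]; exact none_mem_msub S T
  · refine Eq.mpr (congrArg (fun x : Option ↥S.carrier => x ∈ S.msub T)
      (mod_smul_monomial S e m)) ?_
    cases m with
    | none => exact none_mem_msub S T
    | some s =>
      rw [act_some]
      by_cases h : s.1 + coeE e ∈ S.carrier
      · rw [dif_pos h]
        exact mem_msub_some.mpr (hcl s e h (mem_msub_some.mp hm))
      · rw [dif_neg h]
        exact none_mem_msub S T

theorem connected_indec (S : SkewShape n) (hc : S.Connected) : S.Mod.Indecomposable := by
  obtain ⟨⟨x0, hx0⟩, hconn⟩ := hc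
  refine ⟨⟨some ⟨x0, hx0⟩, Option.some_ne_none _⟩, ?_⟩
  intro P Q hP hQ hcov hint
  by_cases hPz : P = {S.Mod.zero}
  · exact Or.inl hPz
  right
  have hex : ∃ m ∈ P, m ≠ S.Mod.zero := by
    by_contra hno
    push_neg at hno
    exact hPz (Set.eq_singleton_iff_unique_mem.mpr ⟨hP.1, fun m hm => hno m hm⟩)
  obtain ⟨m, hmP, hmne⟩ := hex
  rw [mod_zero_eq] at hmne
  obtain ⟨s, rfl⟩ := Option.ne_none_iff_exists'.mp hmne
  have hall : ∀ t : ↥S.carrier, some t ∈ P := fun t =>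
    submod_chain S hP hQ hcov hint (hconn s.1 s.2 t.1 t.2) s.2 t.2 hmP
  apply Set.eq_singleton_iff_unique_mem.mpr ⟨hQ.1, ?_⟩
  intro m hmQ
  cases m with
  | none => rfl
  | some t =>
    exact absurd (Set.mem_singleton_iff.mp (hint ⟨hall t, hmQ⟩)) (Option.some_ne_none t)

theorem indec_connected (S : SkewShape n) (hi : S.Mod.Indecomposable) : S.Connected := by
  obtain ⟨⟨m, hm⟩, hdec⟩ := hi
  obtain ⟨x0, rfl⟩ := Option.ne_none_iff_exists'.mp hm
  refine ⟨⟨x0.1, x0.2⟩, ?_⟩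
  set R : Set (Fin n → ℤ) := {y | Relation.ReflTransGen S.rel x0.1 y} with hR
  have hsymm : Symmetric (Relation.ReflTransGen S.rel) :=
    fun _ _ h => by
      induction h with
      | refl => exact Relation.ReflTransGen.refl
      | tail _ hbc ih => exact Relation.ReflTransGen.head (S.rel_symm hbc) ih
  have hPsub : S.Mod.IsSubmod (S.msub R) :=
    msub_submod S R (fun s e h hs =>
      Relation.ReflTransGen.tail hs ⟨s.2, h, Or.inl (le_add_coeE s.1 e)⟩)
  have hQsub : S.Mod.IsSubmod (S.msub Rᶜ) := by
    refine msub_submod S Rᶜ ?_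
    intro s e h hs hreach
    exact hs (Relation.ReflTransGen.tail hreach ⟨h, s.2, Or.inr (le_add_coeE s.1 e)⟩)
  have hcov : S.msub R ∪ S.msub Rᶜ = Set.univ := by
    apply Set.eq_univ_of_forall
    intro m
    cases m with
    | none => exact Or.inl (none_mem_msub S R)
    | some s =>
      by_cases h : s.1 ∈ R
      · exact Or.inl (mem_msub_some.mpr h)
      · exact Or.inr (mem_msub_some.mpr h)
  have hint : S.msub R ∩ S.msub Rᶜ ⊆ {S.Mod.zero} := by
    rintro m ⟨h1, h2⟩
    cases m with
    | none => rfl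
    | some s => exact absurd (mem_msub_some.mp h1) (mem_msub_some.mp h2)
  rcases hdec _ _ hPsub hQsub hcov hint with hP | hQ
  · exfalso
    have h0 : some x0 ∈ S.msub R := mem_msub_some.mpr Relation.ReflTransGen.refl
    rw [hP] at h0
    exact hm (Set.mem_singleton_iff.mp h0)
  · intro x hx y hy
    have key : ∀ z, z ∈ S.carrier → z ∈ R := by
      intro z hz
      have hu : some ⟨z, hz⟩ ∈ S.msub R ∪ S.msub Rᶜ := hcov ▸ Set.mem_univ _
      rcases hu with h | h
      · exact mem_msub_some.mp h
      · rw [hQ] at h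
        exact absurd (Set.mem_singleton_iff.mp h) (Option.some_ne_none _)
    exact Relation.ReflTransGen.trans (hsymm (key x hx)) (key y hy)

/-- Forward map of the isomorphism `sub(msub T) ≅ T.Mod`. -/
def subFwd (S T : SkewShape n) (h : S.Mod.IsSubmod (S.msub T.carrier)) :
    (S.Mod.sub (S.msub T.carrier) h).carrier → T.Mod.carrier := fun m =>
  match m with
  | ⟨none, _⟩ => none
  | ⟨some s, hm⟩ => some ⟨s.1, mem_msub_some.mp hm⟩

/-- Backward map of the isomorphism `sub(msub T) ≅ T.Mod`. -/
def subBwd (S T : SkewShape n) (hsub : T.carrier ⊆ S.carrier)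
    (h : S.Mod.IsSubmod (S.msub T.carrier)) :
    T.Mod.carrier → (S.Mod.sub (S.msub T.carrier) h).carrier := fun m =>
  match m with
  | none => ⟨none, none_mem_msub S T.carrier⟩
  | some t => ⟨some ⟨t.1, hsub t.2⟩, mem_msub_some.mpr t.2⟩

theorem subFwd_congr (S T : SkewShape n) (h : S.Mod.IsSubmod (S.msub T.carrier))
    (x y : (S.Mod.sub (S.msub T.carrier) h).carrier) (hxy : x.1 = y.1) :
    subFwd S T h x = subFwd S T h y := congrArg _ (Subtype.ext hxy)

/-- The isomorphism `sub(msub T) ≅ T.Mod` for a "component" `T` of `S`. -/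
noncomputable def subIso (S T : SkewShape n) (hsub : T.carrier ⊆ S.carrier)
    (hcl : ∀ x ∈ T.carrier, ∀ e : Fin n → ℕ, x + coeE e ∈ S.carrier →
      x + coeE e ∈ T.carrier)
    (h : S.Mod.IsSubmod (S.msub T.carrier)) :
    FModule.Iso (S.Mod.sub (S.msub T.carrier) h) T.Mod where
  toEquiv :=
    { toFun := subFwd S T h
      invFun := subBwd S T hsub h
      left_inv := by rintro ⟨m, hm⟩; cases m <;> rfl
      right_inv := by rintro m; cases m <;> rfl }
  map_zero := rfl
  map_smul := by
    intro a m
    rcases FreeCM.zero_or_monomial a with rfl | ⟨e, rfl⟩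
    · show subFwd S T h ((S.Mod.sub _ h).smul 0 m) = T.Mod.smul 0 (subFwd S T h m)
      rw [(S.Mod.sub _ h).zero_smul, T.Mod.zero_smul]
      rfl
    · rcases m with ⟨m, hm⟩
      cases m with
      | none =>
        show subFwd S T h ⟨S.Mod.smul (monomial e) none, _⟩
          = T.Mod.smul (monomial e) (subFwd S T h ⟨none, hm⟩)
        rw [subFwd_congr S T h ⟨S.Mod.smul (monomial e) none, _⟩ ⟨none, none_mem_msub S _⟩
          (by show S.Mod.smul (monomial e) none = none; rw [mod_smul_monomial]; rfl)]
        show (none : T.Mod.carrier) = T.Mod.smul (monomial e) none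
        rw [show T.Mod.smul (monomial e) none = T.act e none from mod_smul_monomial T e none]
        rfl
      | some s =>
        have hsT : s.1 ∈ T.carrier := mem_msub_some.mp hm
        show subFwd S T h ⟨S.Mod.smul (monomial e) (some s), _⟩
          = T.Mod.smul (monomial e) (some ⟨s.1, hsT⟩)
        rw [show T.Mod.smul (monomial e) (some ⟨s.1, hsT⟩)
          = T.act e (some ⟨s.1, hsT⟩) from mod_smul_monomial T e _]
        by_cases hTe : s.1 + coeE e ∈ T.carrier
        · have hSe : s.1 + coeE e ∈ S.carrier := hsub hTe
          rw [subFwd_congr S T h ⟨S.Mod.smul (monomial e) (some s), _⟩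
            ⟨some ⟨s.1 + coeE e, hSe⟩, mem_msub_some.mpr hTe⟩
            (by show S.Mod.smul (monomial e) (some s) = some ⟨s.1 + coeE e, hSe⟩
                rw [mod_smul_monomial, act_some, dif_pos hSe])]
          rw [act_some, dif_pos hTe]
          rfl
        · have hSe : s.1 + coeE e ∉ S.carrier := fun h' => hTe (hcl s.1 hsT e h')
          rw [subFwd_congr S T h ⟨S.Mod.smul (monomial e) (some s), _⟩
            ⟨none, none_mem_msub S _⟩
            (by show S.Mod.smul (monomial e) (some s) = none
                rw [mod_smul_monomial, act_some, dif_neg hSe])]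
          rw [act_some, dif_neg hTe]
          rfl

end SkewShape

/-- Indecomposability transfers along isomorphisms. -/
theorem FModule.Iso.indec {A : Type v} [MonoidWithZero A] {M N : FModule A}
    (e : FModule.Iso M N) (h : N.Indecomposable) : M.Indecomposable := by
  obtain ⟨⟨m', hm'⟩, hdec⟩ := h
  constructor
  · refine ⟨e.toEquiv.symm m', fun hc => hm' ?_⟩
    have := congrArg e.toEquiv hc
    rwa [Equiv.apply_symm_apply, e.map_zero] at this
  · intro P Q hP hQ hcov hint
    have subm : ∀ R : Set M.carrier, M.IsSubmod R → N.IsSubmod (e.toEquiv '' R) := by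
      rintro R ⟨h0, hc⟩
      refine ⟨⟨M.zero, h0, e.map_zero⟩, ?_⟩
      rintro a _ ⟨m, hm, rfl⟩
      exact ⟨M.smul a m, hc a m hm, e.map_smul a m⟩
    have hcov' : e.toEquiv '' P ∪ e.toEquiv '' Q = Set.univ := by
      rw [← Set.image_union, hcov, Set.image_univ, Equiv.range_eq_univ]
    have hint' : e.toEquiv '' P ∩ e.toEquiv '' Q ⊆ {N.zero} := by
      rintro _ ⟨⟨p, hp, rfl⟩, ⟨q, hq, hqe⟩⟩
      have hpq : q = p := e.toEquiv.injective hqe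
      subst hpq
      have hz : q = M.zero := hint ⟨hp, hq⟩
      rw [hz, e.map_zero]
      rfl
    have pull : ∀ R : Set M.carrier, M.IsSubmod R →
        e.toEquiv '' R = {N.zero} → R = {M.zero} := by
      intro R hR hRz
      apply Set.eq_singleton_iff_unique_mem.mpr ⟨hR.1, ?_⟩
      intro m hmR
      have him : e.toEquiv m ∈ e.toEquiv '' R := ⟨m, hmR, rfl⟩
      rw [hRz] at him
      have := Set.mem_singleton_iff.mp him
      rw [← e.map_zero] at this
      exact e.toEquiv.injective this
    rcases hdec _ _ (subm P hP) (subm Q hQ) hcov' hint' with h | h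
    · exact Or.inl (pull P hP h)
    · exact Or.inr (pull Q hQ h)

open FModule SkewShape in
/-- `M_S` is indecomposable iff the skew shape `S` is connected; more generally, a
decomposition `S = S₁ ⊔ ⋯ ⊔ S_k` into connected components (pairwise mutually
incomparable connected pieces covering `S`) yields the decomposition
`M_S = M_{S₁} ⊕ ⋯ ⊕ M_{S_k}` of `M_S` into indecomposable direct summands. -/
theorem skewMod_indecomposable_iff_connected {n : ℕ} (S : SkewShape n) :
    ((S.Mod).Indecomposable ↔ S.Connected) ∧
    (∀ (k : ℕ) (C : Fin k → SkewShape n),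
      (∀ i, (C i).Connected) →
      (⋃ i, (C i).carrier) = S.carrier →
      (∀ i j, i ≠ j → ∀ x ∈ (C i).carrier, ∀ y ∈ (C j).carrier, ¬ (x ≤ y ∨ y ≤ x)) →
      ∃ h : ∀ i, (S.Mod).IsSubmod (S.msub (C i).carrier),
        (∀ i, ((S.Mod).sub (S.msub (C i).carrier) (h i)).Indecomposable ∧
          Nonempty (Iso ((S.Mod).sub (S.msub (C i).carrier) (h i)) ((C i).Mod))) ∧
        insert (S.Mod).zero (⋃ i, S.msub (C i).carrier) = Set.univ ∧
        (∀ i j, i ≠ j →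
          S.msub (C i).carrier ∩ S.msub (C j).carrier ⊆ {(S.Mod).zero})) := by
  constructor
  · exact ⟨S.indec_connected, S.connected_indec⟩
  · intro k C hconn hcov hinc
    have hsub : ∀ i, (C i).carrier ⊆ S.carrier := by
      intro i
      rw [← hcov]
      exact Set.subset_iUnion (fun j => (C j).carrier) i
    have hcl : ∀ i, ∀ x ∈ (C i).carrier, ∀ e : Fin n → ℕ,
        x + coeE e ∈ S.carrier → x + coeE e ∈ (C i).carrier := by
      intro i x hx e hS
      have hmem : x + coeE e ∈ ⋃ j, (C j).carrier := by rw [hcov]; exact hS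
      obtain ⟨j, hj⟩ := Set.mem_iUnion.mp hmem
      by_cases hij : i = j
      · subst hij; exact hj
      · exact absurd (Or.inl (le_add_coeE x e)) (hinc i j hij x hx _ hj)
    refine ⟨fun i => msub_submod S _ (fun s e h hs => hcl i s.1 hs e h), ?_, ?_, ?_⟩
    · intro i
      have iso := subIso S (C i) (hsub i) (hcl i)
        (msub_submod S _ (fun s e h hs => hcl i s.1 hs e h))
      exact ⟨iso.indec ((C i).connected_indec (hconn i)), ⟨iso⟩⟩
    · apply Set.eq_univ_of_forall
      intro m
      cases m with
      | none => exact Set.mem_insert _ _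
      | some s =>
        have hmem : s.1 ∈ ⋃ j, (C j).carrier := by rw [hcov]; exact s.2
        obtain ⟨j, hj⟩ := Set.mem_iUnion.mp hmem
        exact Set.mem_insert_iff.mpr
          (Or.inr (Set.mem_iUnion.mpr ⟨j, mem_msub_some.mpr hj⟩))
    · rintro i j hij m ⟨h1, h2⟩
      cases m with
      | none => rfl
      | some s =>
        exact absurd (Or.inl (le_refl s.1))
          (hinc i j hij s.1 (mem_msub_some.mp h1) s.1 (mem_msub_some.mp h2))
end
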